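/- Let ρ : ℂ² → [−∞,∞) be upper semicontinuous and suppose V := max(ρ, 0) is real-valued and continuous on ℂ². Let (n_j) be a strictly increasing sequence of positive integers, let (ε_j) be positive reals with ε_j → 0, and for each j let P_j, Q_j be polynomials in two complex variables satisfying ρ(z,w) − ε_j ≤ max((1/n_j)·log|P_j(z,w)|, (1/n_j)·log|Q_j(z,w)|) ≤ ρ(z,w) for all (z,w) ∈ ℂ² (inequalities in [−∞,∞)). Then the functions U_j(z,w) := max((1/n_j)·log|P_j(z,w) − 1|, (1/n_j)·log|Q_j(z,w) − 1|) converge to V uniformly on every compact subset of the open set {ρ < 0} ∪ {V > 0}. -/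

import Mathlib

open MeasureTheory Filter Topology

noncomputable section

/-- Evaluation of a polynomial in two complex variables at a point of `ℂ × ℂ`. -/
def evalPt (p : MvPolynomial (Fin 2) ℂ) (z : ℂ × ℂ) : ℂ :=
  MvPolynomial.eval ![z.1, z.2] p

/-- `log |x|`, with value `-∞` at `x = 0`. -/
def elog (x : ℂ) : EReal :=
  if x = 0 then ⊥ else ((Real.log (‖x‖) : ℝ) : EReal)

lemma aux_elog_le {x : ℂ} {m r : ℝ} (hm : 0 < m)
    (h : ((m⁻¹ : ℝ) : EReal) * elog x ≤ ((r : ℝ) : EReal)) :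
    ‖x‖ ≤ Real.exp (m * r) := by
  by_cases hx : x = 0
  · simp only [hx, map_zero, norm_zero]
    positivity
  · have hpos : 0 < ‖x‖ := norm_pos_iff.mpr hx
    rw [elog, if_neg hx, ← EReal.coe_mul, EReal.coe_le_coe_iff] at h
    have h2 : Real.log (‖x‖) ≤ m * r := by
      have := mul_le_mul_of_nonneg_left h hm.le
      rwa [← mul_assoc, mul_inv_cancel₀ hm.ne', one_mul] at this
    exact (Real.log_le_iff_le_exp hpos).1 h2

lemma aux_le_elog {x : ℂ} {m r : ℝ} (hm : 0 < m)
    (h : ((r : ℝ) : EReal) ≤ ((m⁻¹ : ℝ) : EReal) * elog x) :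
    Real.exp (m * r) ≤ ‖x‖ := by
  by_cases hx : x = 0
  · exfalso
    rw [elog, if_pos hx, EReal.coe_mul_bot_of_pos (by positivity)] at h
    exact EReal.coe_ne_bot r (le_bot_iff.1 h)
  · have hpos : 0 < ‖x‖ := norm_pos_iff.mpr hx
    rw [elog, if_neg hx, ← EReal.coe_mul, EReal.coe_le_coe_iff] at h
    have h2 : m * r ≤ Real.log (‖x‖) := by
      have := mul_le_mul_of_nonneg_left h hm.le
      rwa [← mul_assoc, mul_inv_cancel₀ hm.ne', one_mul] at this
    exact (Real.le_log_iff_exp_le hpos).1 h2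

lemma aux_upper {x : ℂ} {m v : ℝ} (hm : 0 < m) (hv : 0 ≤ v)
    (hx : ‖x‖ ≤ Real.exp (m * v)) :
    m⁻¹ * Real.log (‖x - 1‖) ≤ v + Real.log 2 / m := by
  have hexp1 : (1:ℝ) ≤ Real.exp (m * v) := Real.one_le_exp (by positivity)
  have h2 : ‖x - 1‖ ≤ 2 * Real.exp (m * v) := by
    have h3 : ‖x - 1‖ ≤ ‖x‖ + 1 := by
      have := norm_sub_le x (1 : ℂ)
      simpa using this
    linarith
  have hlog : Real.log (‖x - 1‖) ≤ Real.log 2 + m * v := by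
    rcases le_or_gt (‖x - 1‖) 1 with h | h
    · refine le_trans (Real.log_nonpos (norm_nonneg _) h) ?_
      have := Real.log_nonneg (by norm_num : (1:ℝ) ≤ 2)
      positivity
    · calc Real.log (‖x - 1‖) ≤ Real.log (2 * Real.exp (m * v)) :=
            Real.log_le_log (lt_trans one_pos h) h2
        _ = Real.log 2 + m * v := by
            rw [Real.log_mul two_ne_zero (Real.exp_ne_zero _), Real.log_exp]
  have := mul_le_mul_of_nonneg_left hlog (inv_nonneg.2 hm.le)
  calc m⁻¹ * Real.log (‖x - 1‖) ≤ m⁻¹ * (Real.log 2 + m * v) := this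
    _ = v + Real.log 2 / m := by field_simp; ring

lemma aux_lower_small {x : ℂ} {m : ℝ} (hm : 0 < m)
    (hx : ‖x‖ ≤ 1 / 2) :
    -(Real.log 2 / m) ≤ m⁻¹ * Real.log (‖x - 1‖) := by
  have h1 : (1:ℝ) / 2 ≤ ‖x - 1‖ := by
    have h := norm_sub_norm_le (1 : ℂ) x
    rw [norm_sub_rev] at h
    simp only [norm_one] at h
    linarith
  have h2 : Real.log (1 / 2) ≤ Real.log (‖x - 1‖) :=
    Real.log_le_log (by norm_num) h1
  have h3 : Real.log ((1:ℝ) / 2) = -Real.log 2 := by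
    rw [one_div, Real.log_inv]
  rw [h3] at h2
  have := mul_le_mul_of_nonneg_left h2 (inv_nonneg.2 hm.le)
  calc -(Real.log 2 / m) = m⁻¹ * (-Real.log 2) := by field_simp
    _ ≤ m⁻¹ * Real.log (‖x - 1‖) := this

lemma aux_lower_big {x : ℂ} {m t : ℝ} (hm : 0 < m) (ht : Real.log 2 ≤ m * t)
    (hx : Real.exp (m * t) ≤ ‖x‖) :
    t - Real.log 2 / m ≤ m⁻¹ * Real.log (‖x - 1‖) := by
  have h2 : (2:ℝ) ≤ Real.exp (m * t) := by
    calc (2:ℝ) = Real.exp (Real.log 2) := (Real.exp_log two_pos).symm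
      _ ≤ Real.exp (m * t) := Real.exp_le_exp.2 ht
  have h1 : Real.exp (m * t) / 2 ≤ ‖x - 1‖ := by
    have h := norm_sub_norm_le x (1 : ℂ)
    simp only [norm_one] at h
    linarith
  have hlog : m * t - Real.log 2 ≤ Real.log (‖x - 1‖) := by
    calc m * t - Real.log 2 = Real.log (Real.exp (m * t) / 2) := by
          rw [Real.log_div (Real.exp_ne_zero _) two_ne_zero, Real.log_exp]
      _ ≤ Real.log (‖x - 1‖) := Real.log_le_log (by positivity) h1
  have := mul_le_mul_of_nonneg_left hlog (inv_nonneg.2 hm.le)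
  calc t - Real.log 2 / m = m⁻¹ * (m * t - Real.log 2) := by field_simp
    _ ≤ m⁻¹ * Real.log (‖x - 1‖) := this

theorem statement14 (ρ : ℂ × ℂ → EReal) (hρ : UpperSemicontinuous ρ)
    (V : ℂ × ℂ → ℝ) (hV : ∀ p, (V p : EReal) = max (ρ p) 0) (hVc : Continuous V)
    (n : ℕ → ℕ) (hn : StrictMono n) (hn0 : ∀ j, 0 < n j)
    (ε : ℕ → ℝ) (hε : ∀ j, 0 < ε j) (hε0 : Tendsto ε atTop (𝓝 0))
    (P Q : ℕ → MvPolynomial (Fin 2) ℂ)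
    (hPQ : ∀ j, ∀ z : ℂ × ℂ,
      ρ z - ((ε j : ℝ) : EReal) ≤
        max (((n j : ℝ)⁻¹ : EReal) * elog (evalPt (P j) z))
          (((n j : ℝ)⁻¹ : EReal) * elog (evalPt (Q j) z)) ∧
      max (((n j : ℝ)⁻¹ : EReal) * elog (evalPt (P j) z))
          (((n j : ℝ)⁻¹ : EReal) * elog (evalPt (Q j) z)) ≤ ρ z) :
    ∀ C : Set (ℂ × ℂ), IsCompact C →
      C ⊆ ({z | ρ z < 0} ∪ {z | 0 < V z}) →
      TendstoUniformlyOn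
        (fun j z => max ((n j : ℝ)⁻¹ * Real.log (‖evalPt (P j) z - 1‖))
            ((n j : ℝ)⁻¹ * Real.log (‖evalPt (Q j) z - 1‖)))
        V atTop C := by
  -- basic facts
  have hmpos : ∀ j, (0:ℝ) < (n j : ℝ) := fun j => by exact_mod_cast hn0 j
  have hV0 : ∀ z, 0 ≤ V z := by
    intro z
    have h := (hV z) ▸ le_max_right (ρ z) 0
    exact_mod_cast h
  have hVzero : ∀ z, ρ z < 0 → V z = 0 := by
    intro z hz
    have h := hV z
    rw [max_eq_right hz.le] at h
    exact_mod_cast h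
  have hρV : ∀ z, 0 < V z → ρ z = ((V z : ℝ) : EReal) := by
    intro z hz
    have h := hV z
    rcases le_or_gt (ρ z) 0 with h0 | h0
    · rw [max_eq_right h0] at h
      exact absurd (EReal.coe_eq_zero.1 h) (ne_of_gt hz)
    · rw [max_eq_left h0.le] at h
      exact h.symm
  -- upper bounds on |P|, |Q| from ρ ≤ r
  have hPle : ∀ j z (r : ℝ), ρ z ≤ ((r : ℝ) : EReal) →
      ‖evalPt (P j) z‖ ≤ Real.exp ((n j : ℝ) * r) := by
    intro j z r hr
    exact aux_elog_le (hmpos j)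
      (le_trans (le_trans (le_max_left _ _) (hPQ j z).2) hr)
  have hQle : ∀ j z (r : ℝ), ρ z ≤ ((r : ℝ) : EReal) →
      ‖evalPt (Q j) z‖ ≤ Real.exp ((n j : ℝ) * r) := by
    intro j z r hr
    exact aux_elog_le (hmpos j)
      (le_trans (le_trans (le_max_right _ _) (hPQ j z).2) hr)
  have hρleV : ∀ z, ρ z ≤ ((V z : ℝ) : EReal) := fun z => (hV z) ▸ le_max_left _ _
  intro C hC hCsub
  rw [Metric.tendstoUniformlyOn_iff]
  intro δ hδ
  set C₁ : Set (ℂ × ℂ) := C ∩ {z | V z ≤ 0} with hC₁def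
  set C₂ : Set (ℂ × ℂ) := C ∩ {z | ρ z < 0}ᶜ with hC₂def
  have hC₁c : IsCompact C₁ := hC.inter_right (isClosed_le hVc continuous_const)
  have hC₂c : IsCompact C₂ := by
    refine hC.inter_right (IsOpen.isClosed_compl ?_)
    exact hρ.isOpen_preimage 0
  have hmem1 : ∀ z ∈ C₁, ρ z < 0 := by
    intro z hz
    rcases hCsub hz.1 with h | h
    · exact h
    · have h2 : V z ≤ 0 := hz.2
      have h3 : 0 < V z := h
      linarith
  have hmem2 : ∀ z ∈ C₂, 0 < V z := fun z hz => (hCsub hz.1).resolve_left hz.2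
  have hcover : ∀ z ∈ C, z ∈ C₁ ∪ C₂ := by
    intro z hz
    by_cases h : ρ z < 0
    · exact Or.inl ⟨hz, le_of_eq (hVzero z h)⟩
    · exact Or.inr ⟨hz, h⟩
  have hdiv : ∀ i j : ℕ, i ≤ j → (1:ℝ) / (j + 1) ≤ 1 / (i + 1) := by
    intro i j h
    apply one_div_le_one_div_of_le (by positivity)
    have : (i:ℝ) ≤ (j:ℝ) := by exact_mod_cast h
    linarith
  -- uniform negative bound for ρ on C₁
  obtain ⟨c₁, hc₁pos, hc₁⟩ :
      ∃ c : ℝ, 0 < c ∧ ∀ z ∈ C₁, ρ z ≤ ((-c : ℝ) : EReal) := by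
    obtain ⟨k, hk⟩ := hC₁c.elim_directed_cover
        (fun k : ℕ => {z : ℂ × ℂ | ρ z < ((-(1 / (k + 1)) : ℝ) : EReal)})
        (fun k => hρ.isOpen_preimage _)
        (by
          intro z hz
          have h0 := hmem1 z hz
          obtain ⟨x, hx1, hx2⟩ := EReal.exists_between_coe_real h0
          have hxneg : x < 0 := by exact_mod_cast hx2
          obtain ⟨k, hk⟩ := exists_nat_one_div_lt (neg_pos.2 hxneg)
          refine Set.mem_iUnion.2 ⟨k, lt_of_lt_of_le hx1 ?_⟩
          rw [EReal.coe_le_coe_iff]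
          linarith)
        (by
          intro i j
          refine ⟨max i j, ?_, ?_⟩
          · intro z hz
            simp only [Set.mem_setOf_eq] at hz ⊢
            refine lt_of_lt_of_le hz (EReal.coe_le_coe_iff.2 ?_)
            have := hdiv i (max i j) (le_max_left i j)
            linarith
          · intro z hz
            simp only [Set.mem_setOf_eq] at hz ⊢
            refine lt_of_lt_of_le hz (EReal.coe_le_coe_iff.2 ?_)
            have := hdiv j (max i j) (le_max_right i j)
            linarith)
    exact ⟨1 / (k + 1), by positivity, fun z hz => le_of_lt (hk hz)⟩
  -- uniform positive lower bound for V on C₂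
  obtain ⟨c₂, hc₂pos, hc₂⟩ : ∃ c : ℝ, 0 < c ∧ ∀ z ∈ C₂, c ≤ V z := by
    obtain ⟨k, hk⟩ := hC₂c.elim_directed_cover
        (fun k : ℕ => {z : ℂ × ℂ | 1 / (k + 1 : ℝ) < V z})
        (fun k => isOpen_lt continuous_const hVc)
        (by
          intro z hz
          obtain ⟨k, hk⟩ := exists_nat_one_div_lt (hmem2 z hz)
          exact Set.mem_iUnion.2 ⟨k, hk⟩)
        (by
          intro i j
          refine ⟨max i j, ?_, ?_⟩
          · intro z hz
            simp only [Set.mem_setOf_eq] at hz ⊢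
            exact lt_of_le_of_lt (hdiv i (max i j) (le_max_left i j)) hz
          · intro z hz
            simp only [Set.mem_setOf_eq] at hz ⊢
            exact lt_of_le_of_lt (hdiv j (max i j) (le_max_right i j)) hz)
    exact ⟨1 / (k + 1), by positivity, fun z hz => le_of_lt (hk hz)⟩
  -- eventual conditions on j
  have hnlarge : ∀ a : ℝ, ∀ᶠ j in atTop, a ≤ (n j : ℝ) := by
    intro a
    obtain ⟨m, hm⟩ := exists_nat_ge a
    filter_upwards [eventually_ge_atTop m] with j hj
    calc a ≤ (m : ℝ) := hm
      _ ≤ (n j : ℝ) := by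
          have : m ≤ n j := le_trans hj hn.le_apply
          exact_mod_cast this
  have hεsmall : ∀ a : ℝ, 0 < a → ∀ᶠ j in atTop, ε j < a := fun a ha =>
    hε0.eventually (Iio_mem_nhds ha)
  have hlog2 : (0:ℝ) ≤ Real.log 2 := Real.log_nonneg (by norm_num)
  filter_upwards [hεsmall (δ / 2) (half_pos hδ), hεsmall (c₂ / 2) (half_pos hc₂pos),
      hnlarge (2 * Real.log 2 / δ + 1), hnlarge (2 * Real.log 2 / c₂),
      hnlarge (Real.log 2 / c₁)] with j hεδ hεc₂ hnδ hnc₂ hnc₁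
  set m : ℝ := (n j : ℝ) with hmdef
  have hm : 0 < m := hmpos j
  -- (b) : log 2 / m < δ / 2
  have hb : Real.log 2 / m < δ / 2 := by
    rw [div_lt_iff₀ hm]
    have h1 : 2 * Real.log 2 / δ < m := by linarith
    rw [div_lt_iff₀ hδ] at h1
    linarith
  -- (d) : log 2 ≤ m * (c₂ / 2)
  have hd : Real.log 2 ≤ m * (c₂ / 2) := by
    have h1 := mul_le_mul_of_nonneg_right hnc₂ (by positivity : (0:ℝ) ≤ c₂ / 2)
    have h2 : 2 * Real.log 2 / c₂ * (c₂ / 2) = Real.log 2 := by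
      field_simp
    linarith
  -- (e) : log 2 ≤ m * c₁
  have he : Real.log 2 ≤ m * c₁ := by
    have h1 := mul_le_mul_of_nonneg_right hnc₁ hc₁pos.le
    have h2 : Real.log 2 / c₁ * c₁ = Real.log 2 := div_mul_cancel₀ _ hc₁pos.ne'
    linarith
  intro z hz
  set p := ‖evalPt (P j) z - 1‖ with hpdef
  set q := ‖evalPt (Q j) z - 1‖ with hqdef
  -- upper bound valid everywhere on C
  have hup : max (m⁻¹ * Real.log p) (m⁻¹ * Real.log q) ≤ V z + Real.log 2 / m := by
    apply max_le
    · exact aux_upper hm (hV0 z) (hPle j z (V z) (hρleV z))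
    · exact aux_upper hm (hV0 z) (hQle j z (V z) (hρleV z))
  rw [Real.dist_eq, abs_sub_lt_iff]
  rcases hcover z hz with hz1 | hz2
  · -- z ∈ C₁ : ρ z ≤ -c₁ < 0, V z = 0
    have hVz : V z = 0 := hVzero z (hmem1 z hz1)
    have hPsmall : ‖evalPt (P j) z‖ ≤ 1 / 2 := by
      have h1 := hPle j z (-c₁) (hc₁ z hz1)
      have h2 : Real.exp (m * -c₁) ≤ 1 / 2 := by
        rw [show m * -c₁ = -(m * c₁) by ring, Real.exp_neg]
        rw [show (1:ℝ)/2 = (Real.exp (Real.log 2))⁻¹ by rw [Real.exp_log two_pos]; norm_num]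
        apply inv_anti₀ (Real.exp_pos _)
        exact Real.exp_le_exp.2 he
      linarith
    have hQsmall : ‖evalPt (Q j) z‖ ≤ 1 / 2 := by
      have h1 := hQle j z (-c₁) (hc₁ z hz1)
      have h2 : Real.exp (m * -c₁) ≤ 1 / 2 := by
        rw [show m * -c₁ = -(m * c₁) by ring, Real.exp_neg]
        rw [show (1:ℝ)/2 = (Real.exp (Real.log 2))⁻¹ by rw [Real.exp_log two_pos]; norm_num]
        apply inv_anti₀ (Real.exp_pos _)
        exact Real.exp_le_exp.2 he
      linarith
    have hlow : -(Real.log 2 / m) ≤ max (m⁻¹ * Real.log p) (m⁻¹ * Real.log q) :=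
      le_max_of_le_left (aux_lower_small hm hPsmall)
    constructor
    · rw [hVz]
      have : (0:ℝ) < δ / 2 := half_pos hδ
      linarith [hlow]
    · rw [hVz]
      rw [hVz] at hup
      linarith [hup]
  · -- z ∈ C₂ : V z ≥ c₂ > 0
    have hVz : 0 < V z := hmem2 z hz2
    have hc₂z : c₂ ≤ V z := hc₂ z hz2
    have hρz : ρ z = ((V z : ℝ) : EReal) := hρV z hVz
    have hεj : ε j < c₂ / 2 := hεc₂
    -- lower bound: one of |P|, |Q| is large
    have hbig : Real.exp (m * (V z - ε j)) ≤ ‖evalPt (P j) z‖ ∨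
        Real.exp (m * (V z - ε j)) ≤ ‖evalPt (Q j) z‖ := by
      have h1 := (hPQ j z).1
      rw [hρz, ← EReal.coe_sub] at h1
      rcases le_max_iff.1 h1 with h | h
      · exact Or.inl (aux_le_elog hm h)
      · exact Or.inr (aux_le_elog hm h)
    have ht : Real.log 2 ≤ m * (V z - ε j) := by
      have h1 : c₂ / 2 ≤ V z - ε j := by linarith
      calc Real.log 2 ≤ m * (c₂ / 2) := hd
        _ ≤ m * (V z - ε j) := by
            apply mul_le_mul_of_nonneg_left h1 hm.le
    have hlow : V z - ε j - Real.log 2 / m ≤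
        max (m⁻¹ * Real.log p) (m⁻¹ * Real.log q) := by
      rcases hbig with h | h
      · exact le_max_of_le_left (aux_lower_big hm ht h)
      · exact le_max_of_le_right (aux_lower_big hm ht h)
    constructor
    · linarith [hlow, hεδ]
    · linarith [hup]
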